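/- Let k and n be positive integers. The number of k-ary paths of order (k+1)n equals (1/(kn+1))·binomial((k+1)n, n); equivalently, (kn+1) times the number of k-ary paths of order (k+1)n equals binomial((k+1)n, n). -/

import Mathlib

/-- A `k`-ary path of order `(k+1)n`: a word over `{U, D}` (here `true` = `U`, with
displacement `(1,k)`, and `false` = `D`, with displacement `(1,−1)`) with exactly `n`
letters `U` and `kn` letters `D`, such that every partial sum has nonnegative
`y`-coordinate (the path then automatically ends at `((k+1)n, 0)`). -/
def IsKaryPath (k n : ℕ) (w : List Bool) : Prop :=
  w.count true = n ∧ w.count false = k * n ∧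
    ∀ p : List Bool, p <+: w → (p.count false : ℤ) ≤ (k : ℤ) * p.count true


/-- weight of a letter -/
def kwt (k : ℕ) (b : Bool) : ℤ := if b then (k : ℤ) else -1

/-- signed sum of a word -/
def kbs (k : ℕ) (w : List Bool) : ℤ := (w.map (kwt k)).sum

lemma kbs_append (k : ℕ) (u v : List Bool) : kbs k (u ++ v) = kbs k u + kbs k v := by
  simp [kbs]

lemma kbs_eq (k : ℕ) (w : List Bool) :
    kbs k w = (k : ℤ) * w.count true - w.count false := by
  induction w with
  | nil => simp [kbs]
  | cons a t ih =>
    cases a <;> simp [kbs, kwt, List.count_cons] at ih ⊢ <;> push_cast <;> linarith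

lemma count_true_add_count_false (w : List Bool) :
    w.count true + w.count false = w.length := by
  induction w with
  | nil => simp
  | cons a t ih => cases a <;> simp [List.count_cons] <;> omega

lemma kbs_rotate (k : ℕ) (w : List Bool) j : kbs k (w.rotate j) = kbs k w := by
  simp [kbs_eq, ((w.rotate_perm j).count_eq _ : _)]

lemma take_rotate_eq (w : List Bool) {j t : ℕ} (hj : j ≤ w.length) (ht : t ≤ w.length) :
    (w.rotate j).take t = ((w ++ w).drop j).take t := by
  rw [List.rotate_eq_drop_append_take hj, List.drop_append,
    Nat.sub_eq_zero_of_le hj, List.drop_zero, List.take_append,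
    List.take_append, List.take_take]
  congr 1
  have : min (t - (w.drop j).length) j = t - (w.drop j).length := by
    simp [List.length_drop]; omega
  rw [this]

/-- The cycle lemma: a word with signed sum `-1` has exactly one rotation all of whose
proper prefixes have nonnegative signed sum. -/
lemma cycle_lemma (k : ℕ) {w : List Bool} (hw : kbs k w = -1) :
    ∃! j, j < w.length ∧ ∀ t < w.length, 0 ≤ kbs k ((w.rotate j).take t) := by
  set N := w.length with hN
  have hN0 : 0 < N := by
    rcases Nat.eq_zero_or_pos N with h | h
    · exfalso; rw [List.length_eq_zero_iff] at h; rw [h] at hw; simp [kbs] at hw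
    · exact h
  set S : ℕ → ℤ := fun i => kbs k ((w ++ w).take i) with hS
  have key1 : ∀ j t, j ≤ N → t ≤ N → kbs k ((w.rotate j).take t) = S (j + t) - S j := by
    intro j t hj ht
    rw [take_rotate_eq w hj ht, hS]
    simp only
    rw [List.take_add, kbs_append]
    ring
  have key2 : ∀ i ≤ N, S (N + i) = S i - 1 := by
    intro i hi
    have h1 : (w ++ w).take (N + i) = w ++ w.take i := by
      rw [List.take_add, List.take_left' hN.symm, List.drop_left' hN.symm]
    have h2 : (w ++ w).take i = w.take i := List.take_append_of_le_length (by omega)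
    rw [hS]; simp only
    rw [h1, h2, kbs_append, hw]; ring
  -- minimum over range N
  obtain ⟨j1, hj1, hj1min⟩ := (Finset.range N).exists_min_image S ⟨0, Finset.mem_range.mpr hN0⟩
  have hex : ∃ j, j < N ∧ ∀ i < N, S j ≤ S i := by
    exact ⟨j1, Finset.mem_range.mp hj1, fun i hi => hj1min i (Finset.mem_range.mpr hi)⟩
  classical
  set j0 := Nat.find hex with hj0def
  obtain ⟨hj0N, hj0min⟩ := Nat.find_spec hex
  have hstrict : ∀ i < j0, S j0 < S i := by
    intro i hij0
    have hiN : i < N := lt_trans hij0 hj0N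
    have h1 : S j0 ≤ S i := hj0min i hiN
    rcases lt_or_eq_of_le h1 with h | h
    · exact h
    · exfalso
      exact Nat.find_min hex hij0 ⟨hiN, fun i' hi' => h ▸ hj0min i' hi'⟩
  refine ⟨j0, ⟨hj0N, ?_⟩, ?_⟩
  · -- existence
    intro t ht
    rw [key1 j0 t (le_of_lt hj0N) (le_of_lt ht), sub_nonneg]
    by_cases h : j0 + t < N
    · exact hj0min _ h
    · have hi : j0 + t = N + (j0 + t - N) := by omega
      have hlt : j0 + t - N < j0 := by omega
      rw [hi, key2 _ (by omega)]
      have := hstrict _ hlt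
      omega
  · -- uniqueness
    rintro j ⟨hjN, hgood⟩
    by_contra hne
    rcases lt_or_gt_of_ne hne with h | h
    · -- j < j0
      have ht : j0 - j < N := by omega
      have := hgood (j0 - j) ht
      rw [key1 j (j0 - j) (le_of_lt hjN) (le_of_lt ht), sub_nonneg] at this
      have heq : j + (j0 - j) = j0 := by omega
      rw [heq] at this
      exact absurd this (not_le.mpr (hstrict j h))
    · -- j > j0
      have ht : N + j0 - j < N := by omega
      have h2 := hgood (N + j0 - j) ht
      rw [key1 j _ (le_of_lt hjN) (le_of_lt ht), sub_nonneg] at h2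
      have heq : j + (N + j0 - j) = N + j0 := by omega
      rw [heq, key2 _ (le_of_lt hj0N)] at h2
      have := hj0min j hjN
      omega

lemma words_finite (a b : ℕ) :
    {w : List Bool | w.count true = a ∧ w.count false = b}.Finite := by
  apply (List.finite_length_eq Bool (a + b)).subset
  rintro w ⟨h1, h2⟩
  simp only [Set.mem_setOf_eq]
  rw [← count_true_add_count_false, h1, h2]

lemma ncard_words_aux : ∀ m a b : ℕ, a + b = m →
    {w : List Bool | w.count true = a ∧ w.count false = b}.ncard = (a + b).choose a := by
  intro m
  induction m with
  | zero =>
    intro a b hab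
    have ha : a = 0 := by omega
    have hb : b = 0 := by omega
    subst ha hb
    have : {w : List Bool | w.count true = 0 ∧ w.count false = 0} = {[]} := by
      ext w
      simp only [Set.mem_setOf_eq, Set.mem_singleton_iff]
      constructor
      · rintro ⟨h1, h2⟩
        have := count_true_add_count_false w
        rw [h1, h2] at this
        exact List.length_eq_zero_iff.mp this.symm
      · rintro rfl; simp
    rw [this]; simp
  | succ m ih =>
    intro a b hab
    match a, b with
    | 0, b =>
      have : {w : List Bool | w.count true = 0 ∧ w.count false = b} =
          {List.replicate b false} := by
        ext w
        simp only [Set.mem_setOf_eq, Set.mem_singleton_iff]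
        constructor
        · rintro ⟨h1, h2⟩
          have hall : ∀ x ∈ w, false = x := by
            intro x hx
            cases x
            · rfl
            · exfalso; exact (List.count_eq_zero.mp h1) hx
          have hlen : w.count false = w.length := List.count_eq_length.mpr hall
          rw [h2] at hlen
          exact List.eq_replicate_iff.mpr ⟨hlen.symm, fun x hx => (hall x hx).symm⟩
        · rintro rfl; simp [List.count_replicate]
      rw [this]; simp
    | a + 1, 0 =>
      have : {w : List Bool | w.count true = a + 1 ∧ w.count false = 0} =
          {List.replicate (a + 1) true} := by
        ext w
        simp only [Set.mem_setOf_eq, Set.mem_singleton_iff]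
        constructor
        · rintro ⟨h1, h2⟩
          have hall : ∀ x ∈ w, true = x := by
            intro x hx
            cases x
            · exfalso; exact (List.count_eq_zero.mp h2) hx
            · rfl
          have hlen : w.count true = w.length := List.count_eq_length.mpr hall
          rw [h1] at hlen
          exact List.eq_replicate_iff.mpr ⟨hlen.symm, fun x hx => (hall x hx).symm⟩
        · rintro rfl; simp [List.count_replicate]
      rw [this]; simp
    | a + 1, b + 1 =>
      have hdec : {w : List Bool | w.count true = a + 1 ∧ w.count false = b + 1} =
          (List.cons true) '' {w | w.count true = a ∧ w.count false = b + 1} ∪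
          (List.cons false) '' {w | w.count true = a + 1 ∧ w.count false = b} := by
        ext w
        simp only [Set.mem_setOf_eq, Set.mem_union, Set.mem_image]
        constructor
        · rintro ⟨h1, h2⟩
          match w with
          | [] => simp at h1
          | true :: t =>
            left
            exact ⟨t, by simp [List.count_cons] at h1 h2 ⊢; omega, rfl⟩
          | false :: t =>
            right
            exact ⟨t, by simp [List.count_cons] at h1 h2 ⊢; omega, rfl⟩
        · rintro (⟨t, ⟨h1, h2⟩, rfl⟩ | ⟨t, ⟨h1, h2⟩, rfl⟩) <;>
            simp [List.count_cons, h1, h2]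
      rw [hdec, Set.ncard_union_eq ?_ ?_ ?_]
      · rw [Set.ncard_image_of_injective _ List.cons_injective,
          Set.ncard_image_of_injective _ List.cons_injective,
          ih a (b + 1) (by omega), ih (a + 1) b (by omega)]
        have e1 : a + (b + 1) = a + b + 1 := by omega
        have e2 : a + 1 + b = a + b + 1 := by omega
        have e3 : a + 1 + (b + 1) = a + b + 1 + 1 := by omega
        rw [e1, e2, e3]
        exact (Nat.choose_succ_succ _ _).symm
      · rw [Set.disjoint_left]
        rintro x ⟨t, _, rfl⟩ ⟨s, _, h⟩
        simp at h
      · exact (words_finite a (b + 1)).image _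
      · exact (words_finite (a + 1) b).image _

lemma path_length {k n : ℕ} {p : List Bool} (hp : IsKaryPath k n p) :
    p.length = n + k * n := by
  rw [← count_true_add_count_false, hp.1, hp.2.1]

lemma path_word_good {k n : ℕ} {p : List Bool} (hp : IsKaryPath k n p) :
    ∀ t < (p ++ [false]).length, 0 ≤ kbs k ((p ++ [false]).take t) := by
  intro t ht
  rw [List.length_append, List.length_singleton] at ht
  have ht' : t ≤ p.length := by omega
  rw [List.take_append_of_le_length ht']
  have hpre : p.take t <+: p := List.take_prefix t p
  have := hp.2.2 (p.take t) hpre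
  rw [kbs_eq]
  linarith

lemma path_word_kbs {k n : ℕ} {p : List Bool} (hp : IsKaryPath k n p) :
    kbs k (p ++ [false]) = -1 := by
  have c1 : (p ++ [false]).count true = n := by simp [List.count_append, hp.1]
  have c2 : (p ++ [false]).count false = k * n + 1 := by simp [List.count_append, hp.2.1]
  rw [kbs_eq, c1, c2]
  push_cast
  ring

lemma good_word_path {k n : ℕ} {v : List Bool}
    (h1 : v.count true = n) (h2 : v.count false = k * n + 1)
    (hg : ∀ t < v.length, 0 ≤ kbs k (v.take t)) :
    ∃ p : List Bool, IsKaryPath k n p ∧ v = p ++ [false] := by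
  have hvne : v ≠ [] := by
    intro h; rw [h] at h2; simp at h2
  have hvlen : 0 < v.length := List.length_pos_iff.mpr hvne
  have hkbsv : kbs k v = -1 := by
    rw [kbs_eq, h1, h2]; push_cast; ring
  set p := v.dropLast with hpdef
  set x := v.getLast hvne with hxdef
  have hvpx : v = p ++ [x] := (List.dropLast_append_getLast hvne).symm
  have hplen : p.length = v.length - 1 := by
    rw [hpdef, List.length_dropLast]
  have hptake : p = v.take (v.length - 1) := by
    rw [hpdef, List.dropLast_eq_take]
  have hpnn : 0 ≤ kbs k p := by
    rw [hptake]; exact hg _ (by omega)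
  have hkbsp : kbs k v = kbs k p + kwt k x := by
    rw [hvpx, kbs_append]; simp [kbs]
  have hx : x = false := by
    cases hx' : x
    · rfl
    · exfalso
      rw [hx'] at hkbsp
      simp [kwt] at hkbsp
      have : (0:ℤ) ≤ (k:ℤ) := Int.natCast_nonneg k
      omega
  rw [hx] at hvpx
  refine ⟨p, ⟨?_, ?_, ?_⟩, hvpx⟩
  · have := h1; rw [hvpx, List.count_append] at this; simpa using this
  · have := h2; rw [hvpx, List.count_append] at this; simp at this; omega
  · intro q hq
    have hqp : q <+: v := hq.trans ⟨[false], hvpx.symm⟩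
    have hqlen : q.length ≤ p.length := hq.length_le
    have hqlt : q.length < v.length := by
      rw [hvpx, List.length_append] at *; simp at hqlen ⊢; omega
    have hqtake : q = v.take q.length := List.prefix_iff_eq_take.mp hqp
    have := hg q.length hqlt
    rw [← hqtake, kbs_eq] at this
    linarith

lemma ncard_paths_mul (k n N : ℕ) (hN : N = n + (k * n + 1)) :
    {w : List Bool | IsKaryPath k n w}.ncard * N = N.choose n := by
  classical
  have hN0 : 0 < N := by omega
  set T : Set (List Bool) := {w | w.count true = n ∧ w.count false = k * n + 1} with hT
  have hmem : ∀ (p : List Bool), IsKaryPath k n p → ∀ j : ℕ,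
      (p ++ [false]).rotate j ∈ T := by
    intro p hp j
    constructor
    · rw [((p ++ [false]).rotate_perm j).count_eq]
      simp [List.count_append, hp.1]
    · rw [((p ++ [false]).rotate_perm j).count_eq]
      simp [List.count_append, hp.2.1]
  have hulen : ∀ (p : List Bool), IsKaryPath k n p → (p ++ [false]).length = N := by
    intro p hp
    rw [List.length_append, path_length hp, List.length_singleton]
    omega
  set f : {w : List Bool // IsKaryPath k n w} × Fin N → T :=
    fun x => ⟨(x.1.1 ++ [false]).rotate x.2.1, hmem x.1.1 x.1.2 x.2.1⟩ with hf
  have hbij : Function.Bijective f := by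
    constructor
    · -- injective
      rintro ⟨⟨p, hp⟩, i, hi⟩ ⟨⟨q, hq⟩, j, hj⟩ h
      simp only [hf, Subtype.mk.injEq] at h
      have hul : (p ++ [false]).length = N := hulen p hp
      have hvl : (q ++ [false]).length = N := hulen q hq
      have hcu := cycle_lemma k (path_word_kbs hp)
      have hgood0 : (0 : ℕ) < (p ++ [false]).length ∧
          ∀ t < (p ++ [false]).length, 0 ≤ kbs k (((p ++ [false]).rotate 0).take t) := by
        refine ⟨by omega, ?_⟩
        intro t ht
        rw [List.rotate_zero]
        exact path_word_good hp t ht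
      have hmod : (p ++ [false]).rotate ((i + (N - j)) % N) =
          (p ++ [false]).rotate (i + (N - j)) := by
        rw [← hul]
        exact List.rotate_mod _ _
      have hj2 : j + (N - j) = N := by omega
      have hud : (p ++ [false]).rotate ((i + (N - j)) % N) = q ++ [false] := by
        rw [hmod, ← List.rotate_rotate, h, List.rotate_rotate, hj2, ← hvl,
          List.rotate_length]
      have hgoodd : (i + (N - j)) % N < (p ++ [false]).length ∧
          ∀ t < (p ++ [false]).length,
            0 ≤ kbs k (((p ++ [false]).rotate ((i + (N - j)) % N)).take t) := by
        refine ⟨by rw [hul]; exact Nat.mod_lt _ hN0, ?_⟩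
        intro t ht
        rw [hud]
        exact path_word_good hq t (by omega)
      have hd0 : (i + (N - j)) % N = 0 := hcu.unique hgoodd hgood0
      have huv : p ++ [false] = q ++ [false] := by
        rw [← hud, hd0, List.rotate_zero]
      have hpq : p = q := by
        have := congrArg List.dropLast huv
        rwa [List.dropLast_concat, List.dropLast_concat] at this
      have hij : i = j := by
        rcases lt_or_ge (i + (N - j)) N with hlt | hge
        · rw [Nat.mod_eq_of_lt hlt] at hd0; omega
        · rw [Nat.mod_eq_sub_mod hge, Nat.mod_eq_of_lt (by omega)] at hd0; omega
      subst hpq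
      simp only [Prod.mk.injEq, Subtype.mk.injEq, Fin.mk.injEq]
      exact ⟨trivial, hij⟩
    · -- surjective
      rintro ⟨w, hw1, hw2⟩
      have hkbs : kbs k w = -1 := by
        rw [kbs_eq, hw1, hw2]; push_cast; ring
      have hwlen : w.length = N := by
        rw [← count_true_add_count_false, hw1, hw2]
        omega
      obtain ⟨j, ⟨hjlt, hjgood⟩, _⟩ := cycle_lemma k hkbs
      have hvlen : (w.rotate j).length = N := by rw [List.length_rotate, hwlen]
      have hv1 : (w.rotate j).count true = n := by
        rw [(w.rotate_perm j).count_eq, hw1]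
      have hv2 : (w.rotate j).count false = k * n + 1 := by
        rw [(w.rotate_perm j).count_eq, hw2]
      have hvgood : ∀ t < (w.rotate j).length, 0 ≤ kbs k ((w.rotate j).take t) := by
        intro t ht
        exact hjgood t (by omega)
      obtain ⟨p, hp, hvp⟩ := good_word_path hv1 hv2 hvgood
      refine ⟨⟨⟨p, hp⟩, ⟨(N - j) % N, Nat.mod_lt _ hN0⟩⟩, ?_⟩
      apply Subtype.ext
      simp only [hf]
      rw [← hvp]
      have h1 : (w.rotate j).rotate ((N - j) % N) = (w.rotate j).rotate (N - j) := by
        rw [← hvlen]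
        exact List.rotate_mod _ _
      have h2 : j + (N - j) = N := by
        rw [hwlen] at hjlt; omega
      rw [h1, List.rotate_rotate, h2, ← hwlen, List.rotate_length]
  have hcard1 : Nat.card ({w : List Bool // IsKaryPath k n w} × Fin N) = Nat.card T :=
    Nat.card_congr (Equiv.ofBijective f hbij)
  have hfin : Nat.card (Fin N) = N := by
    rw [Nat.card_eq_fintype_card, Fintype.card_fin]
  rw [Nat.card_prod, hfin] at hcard1
  have hcard2 : Nat.card {w : List Bool // IsKaryPath k n w} =
      {w : List Bool | IsKaryPath k n w}.ncard :=
    Nat.card_coe_set_eq _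
  have hcard3 : Nat.card T = T.ncard := Nat.card_coe_set_eq _
  rw [hcard2, hcard3] at hcard1
  rw [hcard1, hT, ncard_words_aux (n + (k * n + 1)) n (k * n + 1) rfl]
  rw [hN]

/-- The number of `k`-ary paths of order `(k+1)n` is `(1/(kn+1))·C((k+1)n, n)`:
`(kn+1)` times this number equals `C((k+1)n, n)`. -/
theorem stmt15 (k n : ℕ) (hk : 0 < k) (hn : 0 < n) :
    (k * n + 1) * {w : List Bool | IsKaryPath k n w}.ncard =
      ((k + 1) * n).choose n := by
  have h1 := ncard_paths_mul k n ((k + 1) * n + 1) (by ring)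
  have h2 := Nat.choose_mul_succ_eq ((k + 1) * n) n
  have h3 : (k + 1) * n + 1 - n = k * n + 1 := by
    have : (k + 1) * n = k * n + n := by ring
    omega
  rw [h3] at h2
  apply Nat.eq_of_mul_eq_mul_right (show 0 < (k + 1) * n + 1 by omega)
  calc (k * n + 1) * {w : List Bool | IsKaryPath k n w}.ncard * ((k + 1) * n + 1)
      = (k * n + 1) * ({w : List Bool | IsKaryPath k n w}.ncard * ((k + 1) * n + 1)) := by
        ring
    _ = (k * n + 1) * ((k + 1) * n + 1).choose n := by rw [h1]
    _ = ((k + 1) * n + 1).choose n * (k * n + 1) := by ring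
    _ = ((k + 1) * n).choose n * ((k + 1) * n + 1) := h2.symm
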